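/- arXiv:2212.09112 — 2 statements merged into one kernel-verified Lean document; each statement's English description precedes it below -/
import Mathlib

section
/- Dual integral lemma, case n = 1: for real θ with 0 < θ < 1/2 and distinct u₁, u₂ ∈ ℂ, ∫_ℂ |z - u₁|^{2θ-2}|z - u₂|^{2θ-2} d²z = π · (Γ^ℂ(θ)²/Γ^ℂ(2θ)) · |u₁ - u₂|^{2(2θ-1)}, where Γ^ℂ(θ) = Γ(θ)/Γ(1-θ). -/
open Real MeasureTheory

open Set ENNReal Filter

-- L0': integrability
lemma integrableOn_rpow_exp {a r : ℝ} (ha : 0 < a) (hr : 0 < r) :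
    IntegrableOn (fun t : ℝ => t ^ (a - 1) * Real.exp (-(r * t))) (Ioi 0) := by
  have h0 := Real.GammaIntegral_convergent ha
  have h1 : IntegrableOn (fun t : ℝ => Real.exp (-(r * t)) * (r * t) ^ (a - 1)) (Ioi 0) := by
    have := (integrableOn_Ioi_comp_mul_left_iff
      (fun x : ℝ => Real.exp (-x) * x ^ (a - 1)) 0 hr).mpr
    simpa using this (by simpa using h0)
  have h2 := h1.const_mul (r ^ (1 - a))
  refine (integrableOn_congr_fun (fun t ht => ?_) measurableSet_Ioi).mp h2
  rw [Real.mul_rpow hr.le (le_of_lt ht)]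
  rw [← mul_assoc, mul_comm (r ^ (1-a)) (Real.exp _), mul_assoc, ← mul_assoc (r ^ (1-a)),
    ← Real.rpow_add hr]
  ring_nf
  rw [Real.rpow_zero]
  ring

-- L1: lintegral Gamma representation
lemma lintegral_rpow_exp {a r : ℝ} (ha : 0 < a) (hr : 0 < r) :
    ∫⁻ t in Ioi 0, ENNReal.ofReal (t ^ (a - 1) * Real.exp (-(r * t)))
      = ENNReal.ofReal ((1 / r) ^ a * Real.Gamma a) := by
  rw [← Real.integral_rpow_mul_exp_neg_mul_Ioi ha hr]
  rw [MeasureTheory.ofReal_integral_eq_lintegral_ofReal (integrableOn_rpow_exp ha hr) ?_]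
  filter_upwards [ae_restrict_mem measurableSet_Ioi] with t ht
  have : (0:ℝ) < t := ht
  positivity

-- L6: scaling for lintegral
lemma lintegral_Ioi_scale {c : ℝ} (hc : 0 < c) (f : ℝ → ℝ≥0∞) :
    ∫⁻ x in Ioi 0, f x = ENNReal.ofReal c * ∫⁻ y in Ioi 0, f (c * y) := by
  have hemb : MeasurableEmbedding (fun y : ℝ => c * y) :=
    (Homeomorph.mulLeft₀ c hc.ne').measurableEmbedding
  have hpre : (fun y : ℝ => c * y) ⁻¹' (Ioi 0) = Ioi 0 := by
    ext y; simp [mul_pos_iff_of_pos_left, hc]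
  have h3 : Measure.map (fun y : ℝ => c * y) (volume.restrict (Ioi 0))
      = ENNReal.ofReal c⁻¹ • volume.restrict (Ioi 0) := by
    rw [show volume.restrict (Ioi (0:ℝ)) = volume.restrict ((fun y : ℝ => c*y) ⁻¹' (Ioi 0)) by rw [hpre],
      ← Measure.restrict_map hemb.measurable measurableSet_Ioi,
      Real.map_volume_mul_left hc.ne', abs_of_pos (inv_pos.2 hc), Measure.restrict_smul, hpre]
  rw [← hemb.lintegral_map f, h3, lintegral_smul_measure, smul_eq_mul, ← mul_assoc,
    ← ENNReal.ofReal_mul hc.le, mul_inv_cancel₀ hc.ne', ENNReal.ofReal_one, one_mul]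
open Real MeasureTheory Set ENNReal Filter

lemma gaussian_c_eq {c : ℝ} (p : ℝ × ℝ) :
    Real.exp (-c * p.1 ^ 2) * Real.exp (-c * p.2 ^ 2)
      = Real.exp (-(c * ‖Complex.measurableEquivRealProd.symm p‖ ^ 2)) := by
  rw [Complex.sq_norm, Complex.measurableEquivRealProd_symm_apply, ← Real.exp_add]
  simp only [Complex.normSq_mk]
  ring_nf

lemma integrable_gaussian_c {c : ℝ} (hc : 0 < c) :
    Integrable (fun z : ℂ => Real.exp (-(c * ‖z‖ ^ 2))) := by
  have hP : MeasurePreserving (⇑Complex.measurableEquivRealProd.symm)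
      (volume : Measure (ℝ × ℝ)) (volume : Measure ℂ) :=
    Complex.volume_preserving_equiv_real_prod.symm _
  have h1 : Integrable (fun p : ℝ × ℝ => Real.exp (-c * p.1 ^ 2) * Real.exp (-c * p.2 ^ 2))
      (volume : Measure (ℝ × ℝ)) := by
    rw [MeasureTheory.Measure.volume_eq_prod]
    exact (integrable_exp_neg_mul_sq hc).mul_prod (integrable_exp_neg_mul_sq hc)
  refine (hP.integrable_comp_emb Complex.measurableEquivRealProd.symm.measurableEmbedding).mp ?_
  have : (fun z : ℂ => Real.exp (-(c * ‖z‖ ^ 2))) ∘ ⇑Complex.measurableEquivRealProd.symm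
      = fun p : ℝ × ℝ => Real.exp (-c * p.1 ^ 2) * Real.exp (-c * p.2 ^ 2) := by
    funext p; exact (gaussian_c_eq p).symm
  rw [this]; exact h1

lemma integral_gaussian_c {c : ℝ} (hc : 0 < c) :
    ∫ z : ℂ, Real.exp (-(c * ‖z‖ ^ 2)) = π / c := by
  have hP : MeasurePreserving (⇑Complex.measurableEquivRealProd.symm)
      (volume : Measure (ℝ × ℝ)) (volume : Measure ℂ) :=
    Complex.volume_preserving_equiv_real_prod.symm _
  rw [← hP.integral_comp Complex.measurableEquivRealProd.symm.measurableEmbedding]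
  simp_rw [← gaussian_c_eq]
  rw [MeasureTheory.Measure.volume_eq_prod,
    MeasureTheory.integral_prod_mul (fun a : ℝ => Real.exp (-c * a ^ 2))
      (fun a : ℝ => Real.exp (-c * a ^ 2)), integral_gaussian,
    ← Real.sqrt_mul (div_nonneg pi_nonneg hc.le), Real.sqrt_mul_self (div_nonneg pi_nonneg hc.le)]

lemma complete_square {t s : ℝ} (ht : 0 < t) (hs : 0 < s) (u₁ u₂ z : ℂ) :
    t * ‖z - u₁‖ ^ 2 + s * ‖z - u₂‖ ^ 2
      = (t + s) * ‖z - ⟨(t * u₁.re + s * u₂.re) / (t + s),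
          (t * u₁.im + s * u₂.im) / (t + s)⟩‖ ^ 2
        + t * s / (t + s) * ‖u₁ - u₂‖ ^ 2 := by
  have hts : t + s ≠ 0 := by positivity
  simp only [Complex.sq_norm, Complex.normSq_apply, Complex.sub_re, Complex.sub_im]
  field_simp
  ring

lemma integral_shifted_gaussian {t s : ℝ} (ht : 0 < t) (hs : 0 < s) (u₁ u₂ : ℂ) :
    ∫ z : ℂ, Real.exp (-(t * ‖z - u₁‖ ^ 2 + s * ‖z - u₂‖ ^ 2))
      = π / (t + s) * Real.exp (-(t * s / (t + s) * ‖u₁ - u₂‖ ^ 2)) := by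
  have hts : (0:ℝ) < t + s := by positivity
  set w : ℂ := ⟨(t * u₁.re + s * u₂.re) / (t + s), (t * u₁.im + s * u₂.im) / (t + s)⟩ with hw
  have h1 : ∀ z : ℂ, Real.exp (-(t * ‖z - u₁‖ ^ 2 + s * ‖z - u₂‖ ^ 2))
      = Real.exp (-((t+s) * ‖z - w‖ ^ 2))
        * Real.exp (-(t * s / (t + s) * ‖u₁ - u₂‖ ^ 2)) := by
    intro z
    rw [← Real.exp_add, complete_square ht hs, neg_add]
  simp_rw [h1]
  rw [MeasureTheory.integral_mul_const]
  congr 1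
  rw [show (fun z : ℂ => Real.exp (-((t+s) * ‖z - w‖ ^ 2)))
    = fun z : ℂ => (fun y : ℂ => Real.exp (-((t+s) * ‖y‖ ^ 2))) (z - w) from rfl]
  rw [integral_sub_right_eq_self (fun y : ℂ => Real.exp (-((t+s) * ‖y‖ ^ 2))) w]
  exact integral_gaussian_c hts

lemma integrable_shifted_gaussian {t s : ℝ} (ht : 0 < t) (hs : 0 < s) (u₁ u₂ : ℂ) :
    Integrable (fun z : ℂ =>
      Real.exp (-(t * ‖z - u₁‖ ^ 2 + s * ‖z - u₂‖ ^ 2))) := by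
  have hts : (0:ℝ) < t + s := by positivity
  set w : ℂ := ⟨(t * u₁.re + s * u₂.re) / (t + s), (t * u₁.im + s * u₂.im) / (t + s)⟩ with hw
  have h2 : Integrable (fun z : ℂ => Real.exp (-((t+s) * ‖z - w‖ ^ 2))) :=
    (integrable_gaussian_c hts).comp_sub_right w
  refine (h2.mul_const (Real.exp (-(t * s / (t + s) * ‖u₁ - u₂‖ ^ 2)))).congr
    (Eventually.of_forall fun z => ?_)
  show Real.exp (-((t+s) * ‖z - w‖ ^ 2)) * _ = _
  rw [← Real.exp_add, ← neg_add, ← complete_square ht hs]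

lemma lintegral_shifted_gaussian {t s : ℝ} (ht : 0 < t) (hs : 0 < s) (u₁ u₂ : ℂ) :
    ∫⁻ z : ℂ, ENNReal.ofReal
        (Real.exp (-(t * ‖z - u₁‖ ^ 2 + s * ‖z - u₂‖ ^ 2)))
      = ENNReal.ofReal (π / (t + s)
          * Real.exp (-(t * s / (t + s) * ‖u₁ - u₂‖ ^ 2))) := by
  rw [← integral_shifted_gaussian ht hs,
    MeasureTheory.ofReal_integral_eq_lintegral_ofReal (integrable_shifted_gaussian ht hs u₁ u₂)
      (Eventually.of_forall fun z => (Real.exp_pos _).le)]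

lemma one_div_rpow_eq {x : ℝ} (hx : 0 < x) (p : ℝ) : (1/x) ^ p = x ^ (-p) := by
  rw [one_div, Real.rpow_neg hx.le, ← Real.inv_rpow hx.le]

lemma lintegral_beta {a b : ℝ} (ha : 0 < a) (hb : 0 < b) :
    ∫⁻ x in Ioi 0, ENNReal.ofReal (x ^ (a - 1) * (1 + x) ^ (-(a + b)))
      = ENNReal.ofReal (Real.Gamma a * Real.Gamma b / Real.Gamma (a + b)) := by
  have hab : 0 < a + b := by linarith
  have hG : 0 < Real.Gamma (a + b) := Real.Gamma_pos_of_pos hab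
  have hGa : 0 < Real.Gamma a := Real.Gamma_pos_of_pos ha
  refine (ENNReal.mul_right_strictMono (ENNReal.ofReal_pos.mpr hG).ne' ENNReal.ofReal_ne_top).injective ?_
  have hmeas : AEMeasurable (Function.uncurry fun x t : ℝ =>
      ENNReal.ofReal (x ^ (a-1) * (t ^ (a+b-1) * Real.exp (-((1+x)*t)))))
      ((volume.restrict (Ioi 0)).prod (volume.restrict (Ioi 0))) := by
    apply Measurable.aemeasurable
    fun_prop
  calc ENNReal.ofReal (Real.Gamma (a+b)) * ∫⁻ x in Ioi 0, ENNReal.ofReal (x ^ (a-1) * (1+x) ^ (-(a+b)))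
      = ∫⁻ x in Ioi 0, ENNReal.ofReal (Real.Gamma (a+b)) * ENNReal.ofReal (x ^ (a-1) * (1+x) ^ (-(a+b))) := by
        rw [lintegral_const_mul' _ _ ENNReal.ofReal_ne_top]
    _ = ∫⁻ x in Ioi 0, ∫⁻ t in Ioi 0, ENNReal.ofReal (x ^ (a-1) * (t ^ (a+b-1) * Real.exp (-((1+x)*t)))) := by
        refine setLIntegral_congr_fun measurableSet_Ioi (fun x hx => ?_)
        have h1x : (0:ℝ) < 1 + x := by linarith [mem_Ioi.mp hx]
        have hxpos : (0:ℝ) < x := mem_Ioi.mp hx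
        simp_rw [ENNReal.ofReal_mul (Real.rpow_nonneg hxpos.le _)]
        rw [lintegral_const_mul' _ _ ENNReal.ofReal_ne_top, lintegral_rpow_exp hab h1x,
          one_div_rpow_eq h1x, ENNReal.ofReal_mul (Real.rpow_nonneg h1x.le _)]
        ring
    _ = ∫⁻ t in Ioi 0, ∫⁻ x in Ioi 0, ENNReal.ofReal (x ^ (a-1) * (t ^ (a+b-1) * Real.exp (-((1+x)*t)))) :=
        lintegral_lintegral_swap hmeas
    _ = ∫⁻ t in Ioi 0, ENNReal.ofReal (Real.Gamma a * (t ^ (b-1) * Real.exp (-(1*t)))) := by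
        refine setLIntegral_congr_fun measurableSet_Ioi (fun t ht => ?_)
        have htpos : (0:ℝ) < t := mem_Ioi.mp ht
        have hrw : ∀ x : ℝ, x ^ (a-1) * (t ^ (a+b-1) * Real.exp (-((1+x)*t)))
            = (t ^ (a+b-1) * Real.exp (-t)) * (x ^ (a-1) * Real.exp (-(t*x))) := by
          intro x
          rw [show -((1+x)*t) = -t + -(t*x) by ring, Real.exp_add]
          ring
        simp_rw [hrw, ENNReal.ofReal_mul (by positivity : (0:ℝ) ≤ t ^ (a+b-1) * Real.exp (-t))]
        rw [lintegral_const_mul' _ _ ENNReal.ofReal_ne_top, lintegral_rpow_exp ha htpos,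
          ← ENNReal.ofReal_mul (by positivity)]
        congr 1
        rw [one_div_rpow_eq htpos, one_mul]
        rw [show t ^ (a+b-1) * Real.exp (-t) * (t ^ (-a) * Real.Gamma a)
          = Real.Gamma a * ((t ^ (a+b-1) * t ^ (-a)) * Real.exp (-t)) by ring,
          ← Real.rpow_add htpos]
        ring_nf
    _ = ENNReal.ofReal (Real.Gamma a) * ∫⁻ t in Ioi 0, ENNReal.ofReal (t ^ (b-1) * Real.exp (-(1*t))) := by
        simp_rw [ENNReal.ofReal_mul hGa.le]
        rw [lintegral_const_mul' _ _ ENNReal.ofReal_ne_top]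
    _ = ENNReal.ofReal (Real.Gamma (a+b)) * ENNReal.ofReal (Real.Gamma a * Real.Gamma b / Real.Gamma (a+b)) := by
        rw [lintegral_rpow_exp hb one_pos, ← ENNReal.ofReal_mul hGa.le, ← ENNReal.ofReal_mul hG.le]
        congr 1
        rw [one_div_one, Real.one_rpow]
        field_simp

lemma inv_rpow_eq {x : ℝ} (hx : 0 < x) (p : ℝ) : (x⁻¹) ^ p = x ^ (-p) := by
  rw [← one_div, one_div_rpow_eq hx]

lemma sq_rpow_helper {x : ℝ} (hx : 0 < x) (p : ℝ) : (x ^ 2) ^ p = x ^ (2 * p) := by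
  rw [← Real.rpow_natCast x 2, ← Real.rpow_mul hx.le]
  norm_num

lemma abs_helper {x : ℝ} (hx : 0 < x) (θ : ℝ) : ((1:ℝ)/(x^2)) ^ (1-θ) = x ^ (2*θ-2) := by
  rw [one_div_rpow_eq (by positivity), sq_rpow_helper hx, show 2 * -(1-θ) = 2*θ-2 by ring]

lemma lintegral_rpow_exp' {θ r : ℝ} (hθ : θ < 1) (hr : 0 < r) :
    ∫⁻ t in Ioi 0, ENNReal.ofReal (t ^ (-θ) * Real.exp (-(r * t)))
      = ENNReal.ofReal ((1/r) ^ (1-θ) * Real.Gamma (1-θ)) := by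
  have h := lintegral_rpow_exp (show 0 < 1-θ by linarith) hr
  simp only [show (1:ℝ)-θ-1 = -θ by ring] at h
  exact h

lemma eq_one {θ : ℝ} (hθ : 0 < θ) (hθ' : θ < 1/2) (u₁ u₂ : ℂ) :
    ∫⁻ z : ℂ, ∫⁻ t in Ioi 0, ∫⁻ s in Ioi 0,
        ENNReal.ofReal ((t ^ (-θ) * Real.exp (-(‖z - u₁‖ ^ 2 * t)))
          * (s ^ (-θ) * Real.exp (-(‖z - u₂‖ ^ 2 * s))))
      = ENNReal.ofReal (Real.Gamma (1-θ) ^ 2)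
        * ∫⁻ z : ℂ, ENNReal.ofReal
            (‖z - u₁‖ ^ (2*θ-2) * ‖z - u₂‖ ^ (2*θ-2)) := by
  have hθ1 : θ < 1 := by linarith
  have hG : 0 < Real.Gamma (1-θ) := Real.Gamma_pos_of_pos (by linarith)
  have h0 : (volume : Measure ℂ) {u₁, u₂} = 0 :=
    (Set.toFinite _).measure_zero volume
  have hae : ∀ᵐ z : ℂ, z ∉ ({u₁, u₂} : Set ℂ) := measure_eq_zero_iff_ae_notMem.mp h0
  rw [← lintegral_const_mul' _ _ ENNReal.ofReal_ne_top]
  refine lintegral_congr_ae ?_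
  filter_upwards [hae] with z hz
  have hz1 : z ≠ u₁ := fun h => hz (by simp [h])
  have hz2 : z ≠ u₂ := fun h => hz (by simp [h])
  have hA : 0 < ‖z - u₁‖ := norm_pos_iff.mpr (sub_ne_zero.mpr hz1)
  have hB : 0 < ‖z - u₂‖ := norm_pos_iff.mpr (sub_ne_zero.mpr hz2)
  have hA2 : (0:ℝ) < ‖z - u₁‖ ^ 2 := by positivity
  have hB2 : (0:ℝ) < ‖z - u₂‖ ^ 2 := by positivity
  calc ∫⁻ t in Ioi 0, ∫⁻ s in Ioi 0,
        ENNReal.ofReal ((t ^ (-θ) * Real.exp (-(‖z - u₁‖ ^ 2 * t)))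
          * (s ^ (-θ) * Real.exp (-(‖z - u₂‖ ^ 2 * s))))
      = ∫⁻ t in Ioi 0, ENNReal.ofReal (t ^ (-θ) * Real.exp (-(‖z - u₁‖ ^ 2 * t)))
          * ∫⁻ s in Ioi 0, ENNReal.ofReal (s ^ (-θ) * Real.exp (-(‖z - u₂‖ ^ 2 * s))) := by
        refine setLIntegral_congr_fun measurableSet_Ioi (fun t ht => ?_)
        have ht0 : (0:ℝ) < t := ht
        simp_rw [ENNReal.ofReal_mul (by positivity : (0:ℝ) ≤ t ^ (-θ) * Real.exp (-(‖z - u₁‖ ^ 2 * t)))]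
        rw [lintegral_const_mul' _ _ ENNReal.ofReal_ne_top]
    _ = ENNReal.ofReal ((1/(‖z - u₁‖ ^ 2)) ^ (1-θ) * Real.Gamma (1-θ))
        * ENNReal.ofReal ((1/(‖z - u₂‖ ^ 2)) ^ (1-θ) * Real.Gamma (1-θ)) := by
        rw [lintegral_rpow_exp' hθ1 hB2, lintegral_mul_const' _ _ ENNReal.ofReal_ne_top,
          lintegral_rpow_exp' hθ1 hA2]
    _ = ENNReal.ofReal (Real.Gamma (1-θ) ^ 2)
        * ENNReal.ofReal (‖z - u₁‖ ^ (2*θ-2) * ‖z - u₂‖ ^ (2*θ-2)) := by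
        rw [← ENNReal.ofReal_mul (by positivity), ← ENNReal.ofReal_mul (by positivity)]
        congr 1
        rw [abs_helper hA, abs_helper hB]
        ring

lemma m_abs (u : ℂ) : Measurable fun z : ℂ => ‖z - u‖ :=
  (continuous_norm.comp (continuous_id.sub continuous_const)).measurable

lemma g_meas (θ : ℝ) (u : ℂ) :
    Measurable fun q : ℂ × ℝ => q.2 ^ (-θ) * Real.exp (-(‖q.1 - u‖ ^ 2 * q.2)) :=
  (measurable_snd.pow_const (-θ)).mul
    ((((m_abs u).comp measurable_fst).pow_const 2).mul measurable_snd).neg.exp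

lemma eq_two {θ : ℝ} (hθ : 0 < θ) (hθ' : θ < 1/2) {u₁ u₂ : ℂ} (hu : u₁ ≠ u₂) :
    ∫⁻ z : ℂ, ∫⁻ t in Ioi 0, ∫⁻ s in Ioi 0,
        ENNReal.ofReal ((t ^ (-θ) * Real.exp (-(‖z - u₁‖ ^ 2 * t)))
          * (s ^ (-θ) * Real.exp (-(‖z - u₂‖ ^ 2 * s))))
      = ENNReal.ofReal (π * Real.Gamma (1-2*θ)
          * (Real.Gamma θ * Real.Gamma θ / Real.Gamma (θ+θ))
          * (‖u₁ - u₂‖ ^ 2) ^ (2*θ-1)) := by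
  have h2θ : 2*θ < 1 := by linarith
  have hD : 0 < ‖u₁ - u₂‖ := norm_pos_iff.mpr (sub_ne_zero.mpr hu)
  set D2 : ℝ := ‖u₁ - u₂‖ ^ 2 with hD2def
  have hD2 : 0 < D2 := by positivity
  have hΓ : (0:ℝ) < Real.Gamma (1-2*θ) := Real.Gamma_pos_of_pos (by linarith)
  have hmF : Measurable (Function.uncurry fun (p : ℂ × ℝ) (s : ℝ) =>
      ENNReal.ofReal ((p.2 ^ (-θ) * Real.exp (-(‖p.1 - u₁‖ ^ 2 * p.2)))
        * (s ^ (-θ) * Real.exp (-(‖p.1 - u₂‖ ^ 2 * s))))) :=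
    Measurable.ennreal_ofReal (((g_meas θ u₁).comp measurable_fst).mul
      ((g_meas θ u₂).comp ((measurable_fst.fst).prodMk measurable_snd)))
  calc ∫⁻ z : ℂ, ∫⁻ t in Ioi 0, ∫⁻ s in Ioi 0,
        ENNReal.ofReal ((t ^ (-θ) * Real.exp (-(‖z - u₁‖ ^ 2 * t)))
          * (s ^ (-θ) * Real.exp (-(‖z - u₂‖ ^ 2 * s))))
      = ∫⁻ t in Ioi 0, ∫⁻ z : ℂ, ∫⁻ s in Ioi 0,
        ENNReal.ofReal ((t ^ (-θ) * Real.exp (-(‖z - u₁‖ ^ 2 * t)))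
          * (s ^ (-θ) * Real.exp (-(‖z - u₂‖ ^ 2 * s)))) := by
        refine lintegral_lintegral_swap ?_
        exact (Measurable.lintegral_prod_right hmF).aemeasurable
    _ = ∫⁻ t in Ioi 0, ∫⁻ s in Ioi 0, ∫⁻ z : ℂ,
        ENNReal.ofReal ((t ^ (-θ) * Real.exp (-(‖z - u₁‖ ^ 2 * t)))
          * (s ^ (-θ) * Real.exp (-(‖z - u₂‖ ^ 2 * s)))) := by
        refine lintegral_congr fun t => lintegral_lintegral_swap ?_
        refine Measurable.aemeasurable (Measurable.ennreal_ofReal (Measurable.mul ?_ (g_meas θ u₂)))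
        exact measurable_const.mul
          ((((((m_abs u₁).comp measurable_fst).pow_const 2)).mul measurable_const).neg.exp)
    _ = ∫⁻ t in Ioi 0, ∫⁻ s in Ioi 0,
        ENNReal.ofReal (t ^ (-θ) * s ^ (-θ) * (π/(t+s) * Real.exp (-(t*s/(t+s) * D2)))) := by
        refine setLIntegral_congr_fun measurableSet_Ioi (fun t ht => ?_)
        refine setLIntegral_congr_fun measurableSet_Ioi (fun s hs => ?_)
        have ht0 : (0:ℝ) < t := ht
        have hs0 : (0:ℝ) < s := hs
        have hfun : ∀ z : ℂ, (t ^ (-θ) * Real.exp (-(‖z - u₁‖ ^ 2 * t)))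
            * (s ^ (-θ) * Real.exp (-(‖z - u₂‖ ^ 2 * s)))
            = t ^ (-θ) * s ^ (-θ)
              * Real.exp (-(t * ‖z - u₁‖ ^ 2 + s * ‖z - u₂‖ ^ 2)) := by
          intro z
          rw [show -(t * ‖z - u₁‖ ^ 2 + s * ‖z - u₂‖ ^ 2)
            = -(‖z - u₁‖ ^ 2 * t) + -(‖z - u₂‖ ^ 2 * s) by ring,
            Real.exp_add]
          ring
        simp_rw [hfun, ENNReal.ofReal_mul (by positivity : (0:ℝ) ≤ t ^ (-θ) * s ^ (-θ))]
        rw [lintegral_const_mul' _ _ ENNReal.ofReal_ne_top, lintegral_shifted_gaussian ht0 hs0,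
          ← ENNReal.ofReal_mul (by positivity)]
    _ = ∫⁻ t in Ioi 0, ∫⁻ σ in Ioi 0,
        ENNReal.ofReal (t ^ (-(2*θ)) * (σ ^ (-θ) * (π/(1+σ))
          * Real.exp (-(σ*D2/(1+σ) * t)))) := by
        refine setLIntegral_congr_fun measurableSet_Ioi (fun t ht => ?_)
        have ht0 : (0:ℝ) < t := ht
        rw [lintegral_Ioi_scale ht0]
        have hcong : ∀ σ : ℝ, σ ∈ Ioi (0:ℝ) →
            ENNReal.ofReal (t ^ (-θ) * (t*σ) ^ (-θ) * (π/(t+t*σ) * Real.exp (-(t*(t*σ)/(t+t*σ) * D2))))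
            = ENNReal.ofReal t⁻¹ * ENNReal.ofReal (t ^ (-(2*θ)) * (σ ^ (-θ) * (π/(1+σ))
                * Real.exp (-(σ*D2/(1+σ) * t)))) := by
          intro σ hσ
          have hσ0 : (0:ℝ) < σ := hσ
          have h1σ : (0:ℝ) < 1 + σ := by linarith
          rw [← ENNReal.ofReal_mul (inv_nonneg.mpr ht0.le)]
          congr 1
          rw [Real.mul_rpow ht0.le hσ0.le,
            show t*(t*σ)/(t+t*σ) * D2 = σ*D2/(1+σ) * t by field_simp,
            show -(2*θ) = -θ + -θ by ring, Real.rpow_add ht0,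
            show t+t*σ = t*(1+σ) by ring]
          field_simp
        rw [setLIntegral_congr_fun measurableSet_Ioi hcong,
          lintegral_const_mul' _ _ ENNReal.ofReal_ne_top, ← mul_assoc,
          ← ENNReal.ofReal_mul ht0.le, mul_inv_cancel₀ ht0.ne', ENNReal.ofReal_one, one_mul]
    _ = ∫⁻ σ in Ioi 0, ∫⁻ t in Ioi 0,
        ENNReal.ofReal (t ^ (-(2*θ)) * (σ ^ (-θ) * (π/(1+σ))
          * Real.exp (-(σ*D2/(1+σ) * t)))) := by
        refine lintegral_lintegral_swap (Measurable.aemeasurable ?_)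
        apply Measurable.ennreal_ofReal
        exact (measurable_fst.pow_const _).mul
          (((measurable_snd.pow_const _).mul
            (measurable_const.div (measurable_const.add measurable_snd))).mul
            (((measurable_snd.mul measurable_const).div
              (measurable_const.add measurable_snd)).mul measurable_fst).neg.exp)
    _ = ∫⁻ σ in Ioi 0, ENNReal.ofReal ((π * Real.Gamma (1-2*θ) * D2 ^ (2*θ-1))
          * (σ ^ (θ-1) * (1+σ) ^ (-(θ+θ)))) := by
        refine setLIntegral_congr_fun measurableSet_Ioi (fun σ hσ => ?_)
        have hσ0 : (0:ℝ) < σ := hσ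
        have h1σ : (0:ℝ) < 1 + σ := by linarith
        have hr : (0:ℝ) < σ*D2/(1+σ) := by positivity
        have hfun : ∀ t : ℝ, t ^ (-(2*θ)) * (σ ^ (-θ) * (π/(1+σ)) * Real.exp (-(σ*D2/(1+σ) * t)))
            = (σ ^ (-θ) * (π/(1+σ))) * (t ^ (-(2*θ)) * Real.exp (-(σ*D2/(1+σ) * t))) := by
          intro t; ring
        simp_rw [hfun, ENNReal.ofReal_mul (by positivity : (0:ℝ) ≤ σ ^ (-θ) * (π/(1+σ)))]
        rw [lintegral_const_mul' _ _ ENNReal.ofReal_ne_top, lintegral_rpow_exp' h2θ hr,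
          ← ENNReal.ofReal_mul (by positivity)]
        congr 1
        calc σ ^ (-θ) * (π/(1+σ)) * ((1/(σ*D2/(1+σ))) ^ (1-2*θ) * Real.Gamma (1-2*θ))
            = π * Real.Gamma (1-2*θ) * D2 ^ (2*θ-1)
              * ((σ ^ (-θ) * σ ^ (2*θ-1)) * ((1+σ) ^ (-1:ℝ) * (1+σ) ^ (-(2*θ-1)))) := by
              rw [one_div_rpow_eq hr, show -(1-2*θ) = 2*θ-1 by ring,
                show σ*D2/(1+σ) = σ*(D2*(1+σ)⁻¹) by ring,
                Real.mul_rpow hσ0.le (by positivity),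
                Real.mul_rpow hD2.le (inv_nonneg.mpr h1σ.le),
                inv_rpow_eq h1σ, div_eq_mul_inv, ← Real.rpow_neg_one (1+σ)]
              ring
          _ = π * Real.Gamma (1-2*θ) * D2 ^ (2*θ-1) * (σ ^ (θ-1) * (1+σ) ^ (-(θ+θ))) := by
              rw [← Real.rpow_add hσ0, ← Real.rpow_add h1σ,
                show -θ + (2*θ-1) = θ-1 by ring, show (-1) + -(2*θ-1) = -(θ+θ) by ring]
          _ = _ := by ring
    _ = ENNReal.ofReal (π * Real.Gamma (1-2*θ)
          * (Real.Gamma θ * Real.Gamma θ / Real.Gamma (θ+θ)) * D2 ^ (2*θ-1)) := by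
        have hnn : (0:ℝ) ≤ π * Real.Gamma (1-2*θ) * D2 ^ (2*θ-1) :=
          mul_nonneg (mul_nonneg pi_nonneg hΓ.le) (Real.rpow_nonneg hD2.le _)
        simp_rw [ENNReal.ofReal_mul hnn]
        rw [lintegral_const_mul' _ _ ENNReal.ofReal_ne_top, lintegral_beta hθ hθ,
          ← ENNReal.ofReal_mul hnn]
        congr 1
        ring

/-- The Gamma function of the complex field at a real point: `Γ^ℂ(c) = Γ(c)/Γ(1-c)`. -/
noncomputable def GammaCR (c : ℝ) : ℝ := Real.Gamma c / Real.Gamma (1 - c)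

theorem dual_integral_n_one (θ : ℝ) (hθ : 0 < θ) (hθ' : θ < 1 / 2)
    (u₁ u₂ : ℂ) (hu : u₁ ≠ u₂) :
    ∫ z : ℂ, ‖z - u₁‖ ^ (2 * θ - 2) * ‖z - u₂‖ ^ (2 * θ - 2) =
      π * (GammaCR θ ^ 2 / GammaCR (2 * θ)) *
        ‖u₁ - u₂‖ ^ (2 * (2 * θ - 1)) := by
  have hGθ : 0 < Real.Gamma θ := Real.Gamma_pos_of_pos hθ
  have hG1θ : 0 < Real.Gamma (1-θ) := Real.Gamma_pos_of_pos (by linarith)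
  have hG2θ : 0 < Real.Gamma (2*θ) := Real.Gamma_pos_of_pos (by linarith)
  have hG12θ : 0 < Real.Gamma (1-2*θ) := Real.Gamma_pos_of_pos (by linarith)
  have hD : 0 < ‖u₁ - u₂‖ := norm_pos_iff.mpr (sub_ne_zero.mpr hu)
  have key := (eq_one hθ hθ' u₁ u₂).symm.trans (eq_two hθ hθ' hu)
  set R := π * (GammaCR θ ^ 2 / GammaCR (2*θ)) * ‖u₁-u₂‖ ^ (2*(2*θ-1)) with hRdef
  have hCR2 : 0 < GammaCR (2*θ) := div_pos hG2θ hG12θ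
  have hRnn : 0 ≤ R :=
    mul_nonneg (mul_nonneg pi_nonneg (div_nonneg (sq_nonneg _) hCR2.le))
      (Real.rpow_nonneg hD.le _)
  have halg : π * Real.Gamma (1-2*θ) * (Real.Gamma θ * Real.Gamma θ / Real.Gamma (θ+θ))
      * (‖u₁-u₂‖ ^ 2) ^ (2*θ-1) = Real.Gamma (1-θ)^2 * R := by
    rw [hRdef]
    simp only [GammaCR]
    rw [sq_rpow_helper hD (2*θ-1), show θ+θ = 2*θ by ring]
    field_simp
  have hL : ∫⁻ z : ℂ, ENNReal.ofReal
        (‖z-u₁‖ ^ (2*θ-2) * ‖z-u₂‖ ^ (2*θ-2))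
      = ENNReal.ofReal R := by
    refine (ENNReal.mul_right_strictMono
      (ENNReal.ofReal_pos.mpr (pow_pos hG1θ 2)).ne' ENNReal.ofReal_ne_top).injective ?_
    rw [key, halg, ENNReal.ofReal_mul (sq_nonneg _)]
  rw [MeasureTheory.integral_eq_lintegral_of_nonneg_ae
    (Eventually.of_forall fun z => mul_nonneg (Real.rpow_nonneg (norm_nonneg _) _)
      (Real.rpow_nonneg (norm_nonneg _) _))
    (((m_abs u₁).pow_const _).mul ((m_abs u₂).pow_const _)).aestronglyMeasurable]
  rw [hL, ENNReal.toReal_ofReal hRnn]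
end

section
/- Injectivity of the Anderson map modulo permutations: if (u₁,…,uₙ) and (u₁',…,uₙ') in ℂⁿ give the same values of all x_α and y (with respect to fixed pairwise distinct z₁,…,z_{n-1} disjoint from both u-tuples), then (u₁',…,uₙ') is a permutation of (u₁,…,uₙ). -/
open Finset Polynomial

private lemma multiset_univ_map_perm : ∀ (n : ℕ) (u u' : Fin n → ℂ),
    Multiset.map u Finset.univ.val = Multiset.map u' Finset.univ.val →
    ∃ e : Equiv.Perm (Fin n), u' = u ∘ e := by
  intro n
  induction n with
  | zero =>
    intro u u' _
    exact ⟨Equiv.refl _, funext fun p => p.elim0⟩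
  | succ n ih =>
    intro u u' h
    -- find i with u i = u' (last)
    have hmem : u' (Fin.last n) ∈ Multiset.map u Finset.univ.val := by
      rw [h]; exact Multiset.mem_map_of_mem _ (Finset.mem_univ_val _)
    obtain ⟨i, _, hi⟩ := Multiset.mem_map.1 hmem
    set σ : Equiv.Perm (Fin (n + 1)) := Equiv.swap i (Fin.last n) with hσ
    set v : Fin (n + 1) → ℂ := u ∘ σ with hv
    have hmapσ : Multiset.map (⇑σ) (Finset.univ.val : Multiset (Fin (n+1)))
        = Finset.univ.val := by
      have : Finset.map σ.toEmbedding Finset.univ = Finset.univ := by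
        ext x; simp
      simpa [Finset.map] using congrArg Finset.val this
    have hvmap : Multiset.map v Finset.univ.val = Multiset.map u' Finset.univ.val := by
      rw [← h, hv]
      conv_rhs => rw [← hmapσ]
      rw [Multiset.map_map]
    -- decompose univ over Fin (n+1)
    have hdecomp : (Finset.univ.val : Multiset (Fin (n+1)))
        = Fin.last n ::ₘ Multiset.map Fin.castSucc Finset.univ.val := by
      conv_lhs => rw [Fin.univ_castSuccEmb n]
      rfl
    have hvlast : v (Fin.last n) = u' (Fin.last n) := by
      simp [hv, hσ, Equiv.swap_apply_right, hi]
    rw [hdecomp, Multiset.map_cons, Multiset.map_cons, Multiset.map_map, Multiset.map_map,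
      hvlast] at hvmap
    have htail : Multiset.map (v ∘ Fin.castSucc) Finset.univ.val
        = Multiset.map (u' ∘ Fin.castSucc) Finset.univ.val :=
      (Multiset.cons_inj_right _).1 hvmap
    obtain ⟨e, he⟩ := ih (v ∘ Fin.castSucc) (u' ∘ Fin.castSucc) htail
    -- extend e to Fin (n+1) fixing last
    set e' : Equiv.Perm (Fin (n + 1)) :=
      (finSuccEquivLast.trans (Equiv.optionCongr e)).trans finSuccEquivLast.symm with he'
    have he'cast : ∀ q : Fin n, e' (Fin.castSucc q) = Fin.castSucc (e q) := by
      intro q; simp [he', finSuccEquivLast_castSucc]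
    have he'last : e' (Fin.last n) = Fin.last n := by
      simp [he', finSuccEquivLast_last]
    refine ⟨e'.trans σ, funext fun p => ?_⟩
    induction p using Fin.lastCases with
    | last => simpa [Equiv.trans_apply, he'last, hv] using hvlast.symm
    | cast q =>
      have := congrFun he q
      simpa [Equiv.trans_apply, he'cast, Function.comp, hv] using this

theorem anderson_map_injective_mod_perm (m : ℕ) (z : Fin m → ℂ)
    (hz : Function.Injective z)
    (u u' : Fin (m + 1) → ℂ)
    (hzu : ∀ α p, z α ≠ u p) (hzu' : ∀ α p, z α ≠ u' p)
    (hx : ∀ α : Fin m,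
      -(∏ p, (u p - z α)) / ∏ β ∈ Finset.univ.erase α, (z β - z α) =
        -(∏ p, (u' p - z α)) / ∏ β ∈ Finset.univ.erase α, (z β - z α))
    (hy : (∑ p, u p) - ∑ β, z β = (∑ p, u' p) - ∑ β, z β) :
    ∃ e : Equiv.Perm (Fin (m + 1)), u' = u ∘ e := by
  classical
  set P : ℂ[X] := ∏ p, (X - C (u p)) with hPdef
  set Q : ℂ[X] := ∏ p, (X - C (u' p)) with hQdef
  have hPm : P.Monic := monic_prod_of_monic _ _ fun p _ => monic_X_sub_C _
  have hQm : Q.Monic := monic_prod_of_monic _ _ fun p _ => monic_X_sub_C _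
  have hPdeg : P.natDegree = m + 1 := by
    rw [hPdef, natDegree_prod _ _ (fun p _ => X_sub_C_ne_zero _)]
    simp
  have hQdeg : Q.natDegree = m + 1 := by
    rw [hQdef, natDegree_prod _ _ (fun p _ => X_sub_C_ne_zero _)]
    simp
  -- products at z α agree
  have hprod : ∀ α, (∏ p, (u p - z α)) = ∏ p, (u' p - z α) := by
    intro α
    have hd : (∏ β ∈ Finset.univ.erase α, (z β - z α)) ≠ 0 := by
      refine Finset.prod_ne_zero_iff.2 fun β hβ => ?_
      exact sub_ne_zero.2 fun hzz => (Finset.mem_erase.1 hβ).1 (hz hzz)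
    have := hx α
    field_simp [hd] at this
    exact neg_inj.1 this
  -- evaluations at z α agree
  have heval : ∀ α, (P - Q).eval (z α) = 0 := by
    intro α
    have hP : P.eval (z α) = ∏ p, (z α - u p) := by simp [hPdef, eval_prod]
    have hQ : Q.eval (z α) = ∏ p, (z α - u' p) := by simp [hQdef, eval_prod]
    have h1 : ∏ p, (z α - u p) = (-1 : ℂ) ^ (m + 1) * ∏ p, (u p - z α) := by
      rw [show ((-1 : ℂ)) ^ (m + 1) = ∏ _p : Fin (m + 1), (-1 : ℂ) by simp,
        ← Finset.prod_mul_distrib]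
      exact Finset.prod_congr rfl fun p _ => by ring
    have h2 : ∏ p, (z α - u' p) = (-1 : ℂ) ^ (m + 1) * ∏ p, (u' p - z α) := by
      rw [show ((-1 : ℂ)) ^ (m + 1) = ∏ _p : Fin (m + 1), (-1 : ℂ) by simp,
        ← Finset.prod_mul_distrib]
      exact Finset.prod_congr rfl fun p _ => by ring
    simp only [eval_sub, hP, hQ, h1, h2, hprod α, sub_self]
  -- sums agree
  have hsum : (∑ p, u p) = ∑ p, u' p := by linear_combination hy
  -- coefficients of degree ≥ m agree
  have hcoeff : ∀ k, m ≤ k → (P - Q).coeff k = 0 := by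
    intro k hk
    rw [coeff_sub, sub_eq_zero]
    rcases eq_or_lt_of_le hk with rfl | hk'
    · have cP : P.coeff m = -∑ i, u i := by
        have := prod_X_sub_C_coeff_card_pred (Finset.univ : Finset (Fin (m+1))) u
          (by simp : 0 < (Finset.univ : Finset (Fin (m+1))).card)
        simpa [hPdef] using this
      have cQ : Q.coeff m = -∑ i, u' i := by
        have := prod_X_sub_C_coeff_card_pred (Finset.univ : Finset (Fin (m+1))) u'
          (by simp : 0 < (Finset.univ : Finset (Fin (m+1))).card)
        simpa [hQdef] using this
      rw [cP, cQ, hsum]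
    · rcases eq_or_lt_of_le (Nat.succ_le_of_lt hk') with hk2 | hk2
      · have h1 : P.coeff (m + 1) = 1 := by rw [← hPdeg]; exact hPm.coeff_natDegree
        have h2 : Q.coeff (m + 1) = 1 := by rw [← hQdeg]; exact hQm.coeff_natDegree
        rw [← hk2, Nat.succ_eq_add_one, h1, h2]
      · rw [coeff_eq_zero_of_natDegree_lt (by omega), coeff_eq_zero_of_natDegree_lt (by omega)]
  have hPQ : P = Q := by
    by_cases h0 : P - Q = 0
    · exact sub_eq_zero.1 h0
    · exfalso
      have hdeg : (P - Q).natDegree < m := by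
        by_contra hle
        push_neg at hle
        exact leadingCoeff_ne_zero.2 h0 (hcoeff _ hle)
      exact h0 (Polynomial.eq_zero_of_natDegree_lt_card_of_eval_eq_zero (P - Q) hz heval
        (by simpa using hdeg))
  -- root multisets agree
  have hroots : Multiset.map u Finset.univ.val = Multiset.map u' Finset.univ.val := by
    have rP : P.roots = Multiset.map u Finset.univ.val := by
      rw [hPdef, Finset.prod_eq_multiset_prod,
        show Multiset.map (fun p => X - C (u p)) Finset.univ.val
          = Multiset.map (fun a => X - C a) (Multiset.map u Finset.univ.val) from
          (Multiset.map_map (fun a => X - C a) u Finset.univ.val).symm,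
        Polynomial.roots_multiset_prod_X_sub_C]
    have rQ : Q.roots = Multiset.map u' Finset.univ.val := by
      rw [hQdef, Finset.prod_eq_multiset_prod,
        show Multiset.map (fun p => X - C (u' p)) Finset.univ.val
          = Multiset.map (fun a => X - C a) (Multiset.map u' Finset.univ.val) from
          (Multiset.map_map (fun a => X - C a) u' Finset.univ.val).symm,
        Polynomial.roots_multiset_prod_X_sub_C]
    rw [← rP, ← rQ, hPQ]
  exact multiset_univ_map_perm (m + 1) u u' hroots
end
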